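/- arXiv:2407.20464 — 4 statements merged into one kernel-verified Lean document; each statement's English description precedes it below -/
import Mathlib

section
/- Let f ∈ ℚ[X] be a polynomial of degree d ≥ 1. Then there is a constant C > 0 depending only on f such that for all n ≥ 1 one has h(Res(f^(n), f')) ≤ C · d^n, where h is the Weil logarithmic height of the rational number Res(f^(n), f'). -/
open Polynomial

/-- The `n`-th iterate of a polynomial: `f^(0) = X`, `f^(n) = f(f^(n-1))`. -/
noncomputable def polyIter {R : Type*} [CommSemiring R] (f : R[X]) : ℕ → R[X]
  | 0 => X
  | n + 1 => f.comp (polyIter f n)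

/-- The Sylvester matrix of `f` and `g` (with respect to their natural degrees
`m = deg f`, `n = deg g`): the `(m+n) × (m+n)` matrix whose first `n` rows carry the
(shifted) coefficients of `f` in descending order and whose last `m` rows carry the
(shifted) coefficients of `g`. -/
noncomputable def sylvesterMatrix {R : Type*} [CommRing R] (f g : R[X]) :
    Matrix (Fin (f.natDegree + g.natDegree)) (Fin (f.natDegree + g.natDegree)) R :=
  Matrix.of fun i j =>
    if (i : ℕ) < g.natDegree then
      if (i : ℕ) ≤ (j : ℕ) ∧ (j : ℕ) ≤ (i : ℕ) + f.natDegree then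
        f.coeff (f.natDegree + (i : ℕ) - (j : ℕ))
      else 0
    else
      if (i : ℕ) - g.natDegree ≤ (j : ℕ) ∧ (j : ℕ) ≤ (i : ℕ) - g.natDegree + g.natDegree then
        g.coeff (g.natDegree + ((i : ℕ) - g.natDegree) - (j : ℕ))
      else 0

/-- The resultant `Res(f, g)` of two polynomials, as the determinant of their
Sylvester matrix; so `Res(f, g) = f_m^{deg g} ∏ g(αᵢ)` over the roots `αᵢ` of `f`. -/
noncomputable def resultant {R : Type*} [CommRing R] (f g : R[X]) : R :=
  (sylvesterMatrix f g).det

/-- The Weil logarithmic height of a rational number `a/b` in lowest terms: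
`h(a/b) = max (log |a|) (log |b|)`, with `h(0) = 0` (note `Real.log 0 = 0`). -/
noncomputable def ratHeight (r : ℚ) : ℝ :=
  max (Real.log |(r.num : ℝ)|) (Real.log (r.den : ℝ))

/-! ### Auxiliary lemmas -/

open Finset

section Aux

/-- Determinant bounded by product of row `L¹` norms. -/
lemma abs_det_le_prod_sum {N : ℕ} (M : Matrix (Fin N) (Fin N) ℚ) :
    |M.det| ≤ ∏ i, ∑ j, |M i j| := by
  rw [← Matrix.det_transpose M, Matrix.det_apply]
  simp only [Matrix.transpose_apply]
  calc |∑ σ : Equiv.Perm (Fin N), Equiv.Perm.sign σ • ∏ i, M i (σ i)|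
      ≤ ∑ σ : Equiv.Perm (Fin N), |Equiv.Perm.sign σ • ∏ i, M i (σ i)| :=
        Finset.abs_sum_le_sum_abs _ _
    _ = ∑ σ : Equiv.Perm (Fin N), ∏ i, |M i (σ i)| := by
        refine Finset.sum_congr rfl fun σ _ => ?_
        rcases Int.units_eq_one_or (Equiv.Perm.sign σ) with h | h <;>
          simp [h, Finset.abs_prod]
    _ = ∑ g ∈ (univ : Finset (Equiv.Perm (Fin N))).map
          ⟨fun σ : Equiv.Perm (Fin N) => (σ : Fin N → Fin N),
            fun a b h => Equiv.coe_fn_injective h⟩,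
          ∏ i, |M i (g i)| := by rw [Finset.sum_map]; rfl
    _ ≤ ∑ g ∈ Fintype.piFinset (fun _ : Fin N => (univ : Finset (Fin N))),
          ∏ i, |M i (g i)| := by
        refine Finset.sum_le_sum_of_subset_of_nonneg ?_ ?_
        · intro g _; simp [Fintype.mem_piFinset]
        · intro g _ _; positivity
    _ = ∏ i, ∑ j, |M i j| := by
        rw [Finset.prod_univ_sum (fun _ : Fin N => (univ : Finset (Fin N)))
          (fun i j => |M i j|)]

/-- The coefficient-wise absolute value of a polynomial. -/
noncomputable def maj (p : ℚ[X]) : ℚ[X] :=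
  ⟨AddMonoidAlgebra.ofCoeff (p.toFinsupp.coeff.mapRange (fun a => |a|) abs_zero)⟩

lemma maj_coeff (p : ℚ[X]) (k : ℕ) : (maj p).coeff k = |p.coeff k| := by
  rcases p with ⟨f⟩
  simp [maj, Polynomial.coeff]

lemma natDegree_maj_le (p : ℚ[X]) : (maj p).natDegree ≤ p.natDegree := by
  refine Polynomial.natDegree_le_iff_coeff_eq_zero.2 fun k hk => ?_
  rw [maj_coeff, abs_eq_zero]
  exact Polynomial.coeff_eq_zero_of_natDegree_lt hk

/-- The `L¹`-size of a polynomial: sum of absolute values of coefficients. -/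
noncomputable def ell (p : ℚ[X]) : ℚ := (maj p).eval 1

lemma eval_one_mono {p q : ℚ[X]} (h : ∀ k, p.coeff k ≤ q.coeff k) :
    p.eval 1 ≤ q.eval 1 := by
  rw [Polynomial.eval_eq_sum_range' (n := max p.natDegree q.natDegree + 1)
      (lt_of_le_of_lt (le_max_left _ _) (Nat.lt_succ_self _)),
    Polynomial.eval_eq_sum_range' (n := max p.natDegree q.natDegree + 1)
      (lt_of_le_of_lt (le_max_right _ _) (Nat.lt_succ_self _))]
  exact Finset.sum_le_sum fun i _ => by simpa using h i

lemma ell_eq_sum (p : ℚ[X]) {n : ℕ} (h : p.natDegree < n) :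
    ell p = ∑ i ∈ range n, |p.coeff i| := by
  rw [ell, Polynomial.eval_eq_sum_range' (lt_of_le_of_lt (natDegree_maj_le p) h)]
  simp [maj_coeff]

lemma ell_nonneg (p : ℚ[X]) : 0 ≤ ell p := by
  rw [ell_eq_sum p (Nat.lt_succ_self _)]
  positivity

lemma ell_mul_le (p q : ℚ[X]) : ell (p * q) ≤ ell p * ell q := by
  have h : (maj (p * q)).eval 1 ≤ (maj p * maj q).eval 1 := by
    refine eval_one_mono fun k => ?_
    rw [maj_coeff, Polynomial.coeff_mul, Polynomial.coeff_mul]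
    refine le_trans (Finset.abs_sum_le_sum_abs _ _) (Finset.sum_le_sum fun x _ => ?_)
    rw [abs_mul, maj_coeff, maj_coeff]
  simpa [ell, Polynomial.eval_mul] using h

lemma ell_add_le (p q : ℚ[X]) : ell (p + q) ≤ ell p + ell q := by
  have h : (maj (p + q)).eval 1 ≤ (maj p + maj q).eval 1 := by
    refine eval_one_mono fun k => ?_
    rw [maj_coeff, Polynomial.coeff_add, Polynomial.coeff_add, maj_coeff, maj_coeff]
    exact abs_add_le _ _
  simpa [ell, Polynomial.eval_add] using h

lemma ell_C (a : ℚ) : ell (C a) = |a| := by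
  have h : maj (C a) = C |a| := by
    ext k
    rw [maj_coeff]
    rcases eq_or_ne k 0 with rfl | hk
    · simp
    · simp [Polynomial.coeff_C, hk]
  simp [ell, h]

lemma ell_zero : ell 0 = 0 := by simpa using ell_C 0

lemma ell_X : ell (X : ℚ[X]) = 1 := by
  have h : maj (X : ℚ[X]) = X := by
    ext k
    rw [maj_coeff]
    rcases eq_or_ne k 1 with rfl | hk
    · simp
    · simp [Polynomial.coeff_X, hk, Ne.symm hk]
  simp [ell, h]

lemma ell_sum_le {α : Type*} (s : Finset α) (F : α → ℚ[X]) :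
    ell (∑ i ∈ s, F i) ≤ ∑ i ∈ s, ell (F i) := by
  classical
  induction s using Finset.induction with
  | empty => simp [ell_zero]
  | insert a s h ih =>
    rw [Finset.sum_insert h, Finset.sum_insert h]
    exact le_trans (ell_add_le _ _) (by linarith)

lemma ell_pow_le (g : ℚ[X]) (i : ℕ) : ell (g ^ i) ≤ max 1 (ell g) ^ i := by
  induction i with
  | zero =>
    rw [pow_zero, pow_zero, show (1 : ℚ[X]) = C 1 by simp, ell_C]
    norm_num
  | succ i ih =>
    rw [pow_succ, pow_succ]
    calc ell (g ^ i * g) ≤ ell (g ^ i) * ell g := ell_mul_le _ _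
      _ ≤ max 1 (ell g) ^ i * max 1 (ell g) := by
          have h1 := ell_nonneg (g ^ i)
          have h2 := ell_nonneg g
          have h3 : (0 : ℚ) ≤ max 1 (ell g) ^ i := by positivity
          gcongr
          · exact le_max_right _ _

lemma comp_expand (f g : ℚ[X]) {n : ℕ} (hn : f.natDegree < n) :
    f.comp g = ∑ i ∈ range n, C (f.coeff i) * g ^ i := by
  rw [Polynomial.comp_eq_sum_left]
  exact f.sum_over_range' (by simp) n hn

lemma ell_comp_le (f g : ℚ[X]) :
    ell (f.comp g) ≤ ell f * max 1 (ell g) ^ f.natDegree := by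
  rw [comp_expand f g (Nat.lt_succ_self f.natDegree)]
  calc ell (∑ i ∈ range (f.natDegree + 1), C (f.coeff i) * g ^ i)
      ≤ ∑ i ∈ range (f.natDegree + 1), ell (C (f.coeff i) * g ^ i) := ell_sum_le _ _
    _ ≤ ∑ i ∈ range (f.natDegree + 1), |f.coeff i| * max 1 (ell g) ^ f.natDegree := by
        refine Finset.sum_le_sum fun i hi => ?_
        calc ell (C (f.coeff i) * g ^ i) ≤ ell (C (f.coeff i)) * ell (g ^ i) :=
              ell_mul_le _ _
          _ = |f.coeff i| * ell (g ^ i) := by rw [ell_C]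
          _ ≤ |f.coeff i| * max 1 (ell g) ^ f.natDegree := by
              refine mul_le_mul_of_nonneg_left ?_ (abs_nonneg _)
              refine le_trans (ell_pow_le g i) ?_
              exact pow_le_pow_right₀ (le_max_left _ _)
                (Nat.lt_succ_iff.1 (Finset.mem_range.1 hi))
    _ = ell f * max 1 (ell g) ^ f.natDegree := by
        rw [← Finset.sum_mul, ← ell_eq_sum f (Nat.lt_succ_self f.natDegree)]

/-- The denominator-exponent recursion. -/
def mrec (d : ℕ) : ℕ → ℕ
  | 0 => 0
  | n + 1 => 1 + d * mrec d n

lemma mrec_le (d : ℕ) (hd : 2 ≤ d) (n : ℕ) : mrec d n + 1 ≤ d ^ n := by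
  induction n with
  | zero => simp [mrec]
  | succ n ih =>
    have h2 : d * (mrec d n + 1) ≤ d * d ^ n := Nat.mul_le_mul_left d ih
    rw [pow_succ, mrec]
    nlinarith

lemma ell_iter_le (f : ℚ[X]) (n : ℕ) :
    max 1 (ell (polyIter f n)) ≤ max 1 (ell f) ^ mrec f.natDegree n := by
  induction n with
  | zero =>
    simp [polyIter, mrec, ell_X]
  | succ n ih =>
    have hA : (1 : ℚ) ≤ max 1 (ell f) := le_max_left _ _
    have hpow : (1 : ℚ) ≤ max 1 (ell f) ^ mrec f.natDegree (n + 1) :=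
      one_le_pow₀ hA
    refine max_le hpow ?_
    calc ell (polyIter f (n + 1)) = ell (f.comp (polyIter f n)) := rfl
      _ ≤ ell f * max 1 (ell (polyIter f n)) ^ f.natDegree := ell_comp_le _ _
      _ ≤ max 1 (ell f) * (max 1 (ell f) ^ mrec f.natDegree n) ^ f.natDegree := by
          have h0 : (0 : ℚ) ≤ max 1 (ell (polyIter f n)) := le_trans zero_le_one (le_max_left _ _)
          have h1 := ell_nonneg f
          gcongr ?_ * ?_
          · exact le_max_right _ _
          · exact pow_le_pow_left₀ h0 ih f.natDegree
      _ = max 1 (ell f) ^ mrec f.natDegree (n + 1) := by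
          rw [show mrec f.natDegree (n + 1) = 1 + f.natDegree * mrec f.natDegree n from rfl]
          ring

lemma scaled_comp {f g : ℚ[X]} {b B : ℕ} (d : ℕ) (hd : f.natDegree ≤ d)
    (hf : ∀ k, ∃ z : ℤ, (b : ℚ) * f.coeff k = z)
    (hg : C ((B : ℚ)) * g ∈ lifts (Int.castRingHom ℚ)) :
    C ((b : ℚ) * (B : ℚ) ^ d) * (f.comp g) ∈ lifts (Int.castRingHom ℚ) := by
  have expand : C ((b : ℚ) * (B : ℚ) ^ d) * (f.comp g)
      = ∑ i ∈ range (d + 1),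
          C ((b : ℚ) * f.coeff i * (B : ℚ) ^ (d - i)) * (C (B : ℚ) * g) ^ i := by
    rw [comp_expand f g (Nat.lt_succ_of_le hd), Finset.mul_sum]
    refine Finset.sum_congr rfl fun i hi => ?_
    have hi' : i ≤ d := Nat.lt_succ_iff.1 (Finset.mem_range.1 hi)
    have hBi : (B : ℚ) ^ (d - i) * (B : ℚ) ^ i = (B : ℚ) ^ d := by
      rw [← pow_add]
      congr 1
      omega
    rw [mul_pow, ← Polynomial.C_pow]
    simp only [← mul_assoc, ← Polynomial.C_mul]
    congr 2
    rw [← hBi]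
    ring
  rw [expand]
  refine Subsemiring.sum_mem _ fun i hi => ?_
  refine Subsemiring.mul_mem _ ?_ (Subsemiring.pow_mem _ hg i)
  obtain ⟨z, hz⟩ := hf i
  refine C'_mem_lifts ?_
  refine ⟨z * (B : ℤ) ^ (d - i), ?_⟩
  simp only [eq_intCast]
  push_cast
  rw [← hz]

lemma iter_scaled (f : ℚ[X]) (b : ℕ)
    (hf : ∀ k, ∃ z : ℤ, (b : ℚ) * f.coeff k = z) (n : ℕ) :
    C ((b : ℚ) ^ (mrec f.natDegree n)) * polyIter f n ∈ lifts (Int.castRingHom ℚ) := by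
  induction n with
  | zero => simpa [polyIter, mrec] using X_mem_lifts (Int.castRingHom ℚ)
  | succ n ih =>
    have h := scaled_comp (b := b) (B := b ^ mrec f.natDegree n) f.natDegree le_rfl hf
      (by push_cast; exact ih)
    have he : (b : ℚ) * ((b ^ mrec f.natDegree n : ℕ) : ℚ) ^ f.natDegree
        = (b : ℚ) ^ mrec f.natDegree (n + 1) := by
      push_cast
      rw [← pow_mul, ← pow_succ',
        show mrec f.natDegree (n + 1) = 1 + f.natDegree * mrec f.natDegree n from rfl]
      ring_nf
    rw [he] at h
    exact h

/-- A common denominator for the coefficients of `f`. -/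
def b0 (f : ℚ[X]) : ℕ := ∏ k ∈ range (f.natDegree + 1), (f.coeff k).den

lemma b0_pos (f : ℚ[X]) : 0 < b0 f :=
  Finset.prod_pos fun k _ => (f.coeff k).pos

lemma b0_clears (f : ℚ[X]) : ∀ k, ∃ z : ℤ, (b0 f : ℚ) * f.coeff k = z := by
  intro k
  by_cases hk : k ≤ f.natDegree
  · obtain ⟨t, ht⟩ := Finset.dvd_prod_of_mem (fun k => (f.coeff k).den)
      (Finset.mem_range.2 (Nat.lt_succ_of_le hk))
    refine ⟨(f.coeff k).num * t, ?_⟩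
    have hden0 : ((f.coeff k).den : ℚ) ≠ 0 := by positivity
    have hd : ((f.coeff k).den : ℚ) * f.coeff k = (f.coeff k).num := by
      rw [mul_comm]
      exact ((div_eq_iff hden0).1 (Rat.num_div_den (f.coeff k))).symm
    rw [show b0 f = (f.coeff k).den * t from ht]
    push_cast
    rw [mul_comm ((f.coeff k).den : ℚ) (t : ℚ), mul_assoc, hd]
    ring
  · exact ⟨0, by rw [Polynomial.coeff_eq_zero_of_natDegree_lt (lt_of_not_ge hk)]; simp⟩

lemma b0_clears_deriv (f : ℚ[X]) :
    ∀ k, ∃ z : ℤ, (b0 f : ℚ) * (derivative f).coeff k = z := by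
  intro k
  obtain ⟨z, hz⟩ := b0_clears f (k + 1)
  refine ⟨z * (k + 1), ?_⟩
  rw [Polynomial.coeff_derivative]
  push_cast
  rw [show (b0 f : ℚ) * (f.coeff (k + 1) * ((k : ℚ) + 1))
      = ((b0 f : ℚ) * f.coeff (k + 1)) * ((k : ℚ) + 1) by ring, hz]

lemma natDegree_polyIter (f : ℚ[X]) (n : ℕ) :
    (polyIter f n).natDegree = f.natDegree ^ n := by
  induction n with
  | zero => simp [polyIter]
  | succ n ih =>
    show (f.comp (polyIter f n)).natDegree = f.natDegree ^ (n + 1)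
    rw [Polynomial.natDegree_comp, ih, pow_succ, Nat.mul_comm]

lemma den_num_bound {r : ℚ} {z : ℤ} {B : ℕ} (hB : 0 < B) (h : r * B = z) :
    r.den ≤ B ∧ |r.num| ≤ |z| := by
  have key : r.num * B = z * r.den := by
    have h0 : ((r.num : ℚ)) * B = z * r.den := by
      rw [← Rat.num_div_den r] at h
      field_simp at h
      linarith [h]
    exact_mod_cast h0
  have hden : r.den ∣ B := by
    have h1 : (r.den : ℤ) ∣ r.num * B := ⟨z, by linarith [key]⟩
    have h2 : r.den ∣ r.num.natAbs * B := by
      have h3 := Int.natAbs_dvd_natAbs.2 h1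
      simpa [Int.natAbs_mul] using h3
    exact Nat.Coprime.dvd_of_dvd_mul_left (Nat.coprime_comm.1 r.reduced) h2
  refine ⟨Nat.le_of_dvd hB hden, ?_⟩
  obtain ⟨t, ht⟩ := hden
  have ht0 : (0 : ℤ) < t := by
    rcases Nat.eq_zero_or_pos t with rfl | h'
    · omega
    · exact_mod_cast h'
  have hdZ : (r.den : ℤ) ≠ 0 := by exact_mod_cast r.den_nz
  have hnum : r.num * t = z := by
    refine mul_right_cancel₀ hdZ ?_
    have hBt : (B : ℤ) = (r.den : ℤ) * t := by exact_mod_cast ht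
    rw [← key, hBt]
    ring
  rcases eq_or_ne z 0 with rfl | hz
  · have h0 : r.num = 0 := by
      rcases mul_eq_zero.1 hnum with h' | h'
      · exact h'
      · omega
    simp [h0]
  · exact Int.le_of_dvd (abs_pos.2 hz) ((abs_dvd _ _).2 ((dvd_abs _ _).2 ⟨t, hnum.symm⟩))

lemma row_helper (p : ℚ[X]) (c N : ℕ) :
    ∑ j : Fin N, (if c ≤ (j : ℕ) ∧ (j : ℕ) ≤ c + p.natDegree
        then |p.coeff (p.natDegree + c - (j : ℕ))| else 0) ≤ ell p := by
  rw [ell_eq_sum p (Nat.lt_succ_self _)]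
  rw [← Finset.sum_filter]
  have hinj : ∀ j₁ ∈ Finset.univ.filter
      (fun j : Fin N => c ≤ (j : ℕ) ∧ (j : ℕ) ≤ c + p.natDegree),
      ∀ j₂ ∈ Finset.univ.filter
      (fun j : Fin N => c ≤ (j : ℕ) ∧ (j : ℕ) ≤ c + p.natDegree),
      p.natDegree + c - (j₁ : ℕ) = p.natDegree + c - (j₂ : ℕ) → j₁ = j₂ := by
    intro j₁ h₁ j₂ h₂ hj
    simp only [Finset.mem_filter] at h₁ h₂
    have : (j₁ : ℕ) = (j₂ : ℕ) := by omega
    exact Fin.ext this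
  rw [← Finset.sum_image (g := fun j : Fin N => p.natDegree + c - (j : ℕ))
    (f := fun k => |p.coeff k|) hinj]
  refine Finset.sum_le_sum_of_subset_of_nonneg ?_ (fun k _ _ => abs_nonneg _)
  intro k hk
  simp only [Finset.mem_image, Finset.mem_filter] at hk
  obtain ⟨j, ⟨_, hj1, hj2⟩, rfl⟩ := hk
  simp only [Finset.mem_range]
  omega

lemma card_filter_lt (N e : ℕ) :
    (Finset.univ.filter (fun i : Fin N => (i : ℕ) < e)).card ≤ e := by
  have h : (Finset.univ.filter (fun i : Fin N => (i : ℕ) < e)).card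
      ≤ (Finset.range e).card := by
    refine Finset.card_le_card_of_injOn (fun i : Fin N => (i : ℕ)) ?_ ?_
    · intro i hi
      simp only [Finset.mem_coe, Finset.mem_filter] at hi
      exact Finset.mem_range.2 hi.2
    · intro a _ b _ hab
      exact Fin.ext hab
  simpa using h

lemma ratHeight_le_log {r : ℚ} {Q : ℝ} (h1 : |(r.num : ℝ)| ≤ Q) (h2 : (r.den : ℝ) ≤ Q)
    (hQ : 1 ≤ Q) : ratHeight r ≤ Real.log Q := by
  refine max_le ?_ ?_
  · rcases eq_or_ne r.num 0 with h | h
    · simp only [h]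
      simpa using Real.log_nonneg hQ
    · refine Real.log_le_log ?_ h1
      have : r.num ≠ 0 := h
      positivity
  · refine Real.log_le_log ?_ h2
    have := r.pos
    positivity

lemma det_size_one {m : ℕ} (h : m = 1) (M : Matrix (Fin m) (Fin m) ℚ) :
    M.det = M ⟨0, h ▸ Nat.zero_lt_one⟩ ⟨0, h ▸ Nat.zero_lt_one⟩ := by
  subst h
  rw [Matrix.det_fin_one]
  rfl

end Aux


/-- Product of an `ite` over `Fin N`. -/
lemma prod_ite_le {N e : ℕ} {x y : ℚ} (hx : 1 ≤ x) (hy : 1 ≤ y) :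
    (∏ i : Fin N, (if (i : ℕ) < e then x else y)) ≤ x ^ e * y ^ N := by
  rw [Finset.prod_ite, Finset.prod_const, Finset.prod_const]
  have h1 : x ^ (Finset.univ.filter (fun i : Fin N => (i : ℕ) < e)).card ≤ x ^ e :=
    pow_le_pow_right₀ hx (card_filter_lt N e)
  have h2 : y ^ (Finset.univ.filter (fun i : Fin N => ¬ (i : ℕ) < e)).card ≤ y ^ N := by
    refine pow_le_pow_right₀ hy ?_
    refine le_trans (Finset.card_filter_le _ _) ?_
    simp
  exact mul_le_mul h1 h2 (by positivity) (by positivity)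

set_option maxHeartbeats 2000000 in
/-- The height of `Res(f^(n), f')` grows at most like `d^n`. -/
theorem height_resultant_iterate (f : ℚ[X]) (hdeg : 1 ≤ f.natDegree) :
    ∃ C : ℝ, 0 < C ∧ ∀ n : ℕ, 1 ≤ n →
      ratHeight (_root_.resultant (polyIter f n) (derivative f)) ≤ C * (f.natDegree : ℝ) ^ n := by
  by_cases hd2 : 2 ≤ f.natDegree
  · -- main case: d ≥ 2
    have one_le_mul' : ∀ {x y : ℚ}, 1 ≤ x → 1 ≤ y → 1 ≤ x * y := fun {x y} hx hy =>
      le_trans hx (le_mul_of_one_le_right (by linarith) hy)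
    have he : (derivative f).natDegree < f.natDegree :=
      Polynomial.natDegree_derivative_lt (by omega)
    have hA1 : (1 : ℚ) ≤ max 1 (ell f) := le_max_left _ _
    have hLG1 : (1 : ℚ) ≤ max 1 (ell (derivative f)) := le_max_left _ _
    have hb1 : 1 ≤ b0 f := b0_pos f
    set a : ℝ := Real.log ((max 1 (ell f) : ℚ) : ℝ) with ha_def
    set κ : ℝ := Real.log ((max 1 (ell (derivative f)) : ℚ) : ℝ) with hk_def
    set β : ℝ := Real.log ((b0 f : ℕ) : ℝ) with hb_def
    have ha0 : 0 ≤ a := Real.log_nonneg (by exact_mod_cast hA1)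
    have hk0 : 0 ≤ κ := Real.log_nonneg (by exact_mod_cast hLG1)
    have hb0' : 0 ≤ β := Real.log_nonneg (by exact_mod_cast hb1)
    refine ⟨((f.natDegree : ℝ) + 2) * (a + κ + β + 1), ?_, fun n hn => ?_⟩
    · have hd0 : (0 : ℝ) < (f.natDegree : ℝ) + 2 := by positivity
      nlinarith
    · -- fix n
      set F := polyIter f n with hF_def
      set G := derivative f with hG_def
      set e := G.natDegree with he_def
      set N := F.natDegree + G.natDegree with hN_def
      set m := mrec f.natDegree n with hm_def
      set S := sylvesterMatrix F G with hS_def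
      have hDn : F.natDegree = f.natDegree ^ n := natDegree_polyIter f n
      have hmn : m + 1 ≤ f.natDegree ^ n := mrec_le _ hd2 n
      have hd_le : f.natDegree ≤ f.natDegree ^ n := Nat.le_self_pow (by omega) _
      have hNle : N ≤ 2 * f.natDegree ^ n := by omega
      set LF : ℚ := max 1 (ell F) with hLF_def
      have hLF1 : (1 : ℚ) ≤ LF := le_max_left _ _
      have hLFA : LF ≤ (max 1 (ell f)) ^ m := ell_iter_le f n
      -- row sums
      have rowbound : ∀ i : Fin N, (∑ j, |S i j|)
          ≤ (if (i : ℕ) < e then LF else max 1 (ell G)) := by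
        intro i
        by_cases hi : (i : ℕ) < e
        · rw [if_pos hi]
          have hentry : ∀ j : Fin N, |S i j|
              = (if (i : ℕ) ≤ (j : ℕ) ∧ (j : ℕ) ≤ (i : ℕ) + F.natDegree
                  then |F.coeff (F.natDegree + (i : ℕ) - (j : ℕ))| else 0) := by
            intro j
            rw [he_def] at hi
            rw [hS_def]
            simp only [sylvesterMatrix, Matrix.of_apply, if_pos hi]
            split <;> simp
          rw [Finset.sum_congr rfl (fun j _ => hentry j)]
          exact le_trans (row_helper F (i : ℕ) N) (le_max_right _ _)
        · rw [if_neg hi]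
          have hentry : ∀ j : Fin N, |S i j|
              = (if (i : ℕ) - e ≤ (j : ℕ) ∧ (j : ℕ) ≤ (i : ℕ) - e + G.natDegree
                  then |G.coeff (G.natDegree + ((i : ℕ) - e) - (j : ℕ))| else 0) := by
            intro j
            rw [he_def] at hi ⊢
            rw [hS_def]
            simp only [sylvesterMatrix, Matrix.of_apply, if_neg hi]
            split <;> simp
          rw [Finset.sum_congr rfl (fun j _ => hentry j)]
          exact le_trans (row_helper G ((i : ℕ) - e) N) (le_max_right _ _)
      have hdet : |S.det| ≤ LF ^ e * (max 1 (ell G)) ^ N := by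
        refine le_trans (abs_det_le_prod_sum S) ?_
        refine le_trans (Finset.prod_le_prod (fun i _ => by positivity)
          (fun i _ => rowbound i)) ?_
        exact prod_ite_le hLF1 hLG1
      -- denominators
      have hFc : ∀ k, ∃ z : ℤ, ((b0 f : ℚ)) ^ m * F.coeff k = z := by
        have h := iter_scaled f (b0 f) (b0_clears f) n
        rw [lifts_iff_coeff_lifts] at h
        intro k
        obtain ⟨z, hz⟩ := h k
        simp only [Polynomial.coeff_C_mul, eq_intCast] at hz
        exact ⟨z, hz.symm⟩
      have hGc := b0_clears_deriv f
      set cfun : Fin N → ℚ :=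
        fun i => if (i : ℕ) < e then ((b0 f : ℚ)) ^ m else (b0 f : ℚ) with hcfun_def
      have hint : ∀ i j, ∃ z : ℤ, cfun i * S i j = (z : ℚ) := by
        intro i j
        rw [hcfun_def, hS_def]
        simp only [sylvesterMatrix, Matrix.of_apply]
        by_cases hi : (i : ℕ) < e
        · simp only [if_pos hi, if_pos (show (i : ℕ) < G.natDegree from hi)]
          split
          · exact hFc _
          · exact ⟨0, by simp⟩
        · simp only [if_neg hi, if_neg (show ¬ (i : ℕ) < G.natDegree from hi)]
          split
          · exact hGc _
          · exact ⟨0, by simp⟩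
      set T0 : Matrix (Fin N) (Fin N) ℤ := fun i j => (hint i j).choose with hT0_def
      have hT0 : ∀ i j, ((T0 i j : ℤ) : ℚ) = cfun i * S i j :=
        fun i j => ((hint i j).choose_spec).symm
      set B0 : ℕ := ∏ i : Fin N, (if (i : ℕ) < e then (b0 f) ^ m else b0 f) with hB0_def
      have hB0cast : (B0 : ℚ) = ∏ i, cfun i := by
        rw [hB0_def, Nat.cast_prod]
        refine Finset.prod_congr rfl fun i _ => ?_
        simp only [hcfun_def]
        by_cases hi : (i : ℕ) < e
        · rw [if_pos hi, if_pos hi]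
          push_cast
          ring
        · rw [if_neg hi, if_neg hi]
      have hB0pos : 0 < B0 := by
        rw [hB0_def]
        refine Finset.prod_pos fun i _ => ?_
        split <;> positivity
      have hdetT : ((T0.det : ℤ) : ℚ) = (B0 : ℚ) * S.det := by
        have hmap : T0.map (Int.castRingHom ℚ)
            = Matrix.of (fun i j => cfun i * S i j) := by
          ext i j
          simp only [Matrix.map_apply, Matrix.of_apply, eq_intCast]
          exact hT0 i j
        calc ((T0.det : ℤ) : ℚ) = (Int.castRingHom ℚ) T0.det := rfl
          _ = (T0.map (Int.castRingHom ℚ)).det := RingHom.map_det _ _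
          _ = (Matrix.of fun i j => cfun i * S i j).det := by rw [hmap]
          _ = (∏ i, cfun i) * S.det := Matrix.det_mul_column cfun S
          _ = (B0 : ℚ) * S.det := by rw [hB0cast]
      have hrB : S.det * (B0 : ℚ) = ((T0.det : ℤ) : ℚ) := by rw [hdetT]; ring
      obtain ⟨hden, hnum⟩ := den_num_bound hB0pos hrB
      have hB0bound : (B0 : ℚ) ≤ ((b0 f : ℚ) ^ m) ^ e * (b0 f : ℚ) ^ N := by
        rw [hB0cast]
        have : ∀ i : Fin N, cfun i = (if (i : ℕ) < e then ((b0 f : ℚ)) ^ m else (b0 f : ℚ)) :=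
          fun i => by rw [hcfun_def]
        rw [Finset.prod_congr rfl fun i _ => this i]
        refine prod_ite_le ?_ ?_
        · exact one_le_pow₀ (by exact_mod_cast hb1)
        · exact_mod_cast hb1
      set Q : ℚ := ((b0 f : ℚ) ^ m) ^ e * (b0 f : ℚ) ^ N * (LF ^ e * (max 1 (ell G)) ^ N)
        with hQ_def
      have hb1Q : (1 : ℚ) ≤ (b0 f : ℚ) := by exact_mod_cast hb1
      have hf1 : (1 : ℚ) ≤ ((b0 f : ℚ) ^ m) ^ e := one_le_pow₀ (one_le_pow₀ hb1Q)
      have hf2 : (1 : ℚ) ≤ (b0 f : ℚ) ^ N := one_le_pow₀ hb1Q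
      have hf3 : (1 : ℚ) ≤ LF ^ e := one_le_pow₀ hLF1
      have hf4 : (1 : ℚ) ≤ (max 1 (ell G)) ^ N := one_le_pow₀ hLG1
      have hQ1 : (1 : ℚ) ≤ Q := one_le_mul' (one_le_mul' hf1 hf2) (one_le_mul' hf3 hf4)
      have hq1 : (|S.det.num| : ℚ) ≤ Q := by
        calc (|S.det.num| : ℚ) ≤ (|T0.det| : ℚ) := by exact_mod_cast hnum
          _ = |((T0.det : ℤ) : ℚ)| := by norm_cast
          _ = (B0 : ℚ) * |S.det| := by
              rw [hdetT, abs_mul, abs_of_nonneg (by positivity : (0 : ℚ) ≤ (B0 : ℚ))]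
          _ ≤ (((b0 f : ℚ) ^ m) ^ e * (b0 f : ℚ) ^ N) * (LF ^ e * (max 1 (ell G)) ^ N) :=
              mul_le_mul hB0bound hdet (abs_nonneg _) (by positivity)
          _ = Q := by rw [hQ_def]
      have hq2 : (S.det.den : ℚ) ≤ Q := by
        calc (S.det.den : ℚ) ≤ (B0 : ℚ) := by exact_mod_cast hden
          _ ≤ ((b0 f : ℚ) ^ m) ^ e * (b0 f : ℚ) ^ N := hB0bound
          _ ≤ Q := le_mul_of_one_le_right (by positivity) (one_le_mul' hf3 hf4)
      -- pass to ℝ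
      have hheight : ratHeight S.det ≤ Real.log ((Q : ℚ) : ℝ) := by
        refine ratHeight_le_log ?_ ?_ ?_
        · have : ((|S.det.num| : ℤ) : ℝ) ≤ ((Q : ℚ) : ℝ) := by exact_mod_cast hq1
          simpa using this
        · exact_mod_cast hq2
        · exact_mod_cast hQ1
      -- bound the log
      have hLFpos : (0 : ℝ) < ((LF : ℚ) : ℝ) := by
        have : (0 : ℚ) < LF := by linarith
        exact_mod_cast this
      have hlogLF : Real.log ((LF : ℚ) : ℝ) ≤ (m : ℝ) * a := by
        have hcast : ((LF : ℚ) : ℝ) ≤ (((max 1 (ell f)) ^ m : ℚ) : ℝ) := by exact_mod_cast hLFA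
        refine le_trans (Real.log_le_log hLFpos hcast) ?_
        rw [ha_def]
        push_cast
        rw [Real.log_pow]
      have hlogQ : Real.log ((Q : ℚ) : ℝ)
          ≤ (e : ℝ) * ((m : ℝ) * β) + (N : ℝ) * β + (e : ℝ) * ((m : ℝ) * a) + (N : ℝ) * κ := by
        have hQcast : ((Q : ℚ) : ℝ)
            = (((b0 f : ℝ)) ^ m) ^ e * ((b0 f : ℝ)) ^ N
              * (((LF : ℚ) : ℝ) ^ e * (((max 1 (ell G)) : ℚ) : ℝ) ^ N) := by
          rw [hQ_def]; push_cast; ring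
        rw [hQcast]
        have p1 : (0 : ℝ) < (((b0 f : ℝ)) ^ m) ^ e := by positivity
        have p2 : (0 : ℝ) < ((b0 f : ℝ)) ^ N := by positivity
        have p3 : (0 : ℝ) < ((LF : ℚ) : ℝ) ^ e := by positivity
        have p4 : (0 : ℝ) < (((max 1 (ell G)) : ℚ) : ℝ) ^ N := by
          have : (0 : ℚ) < max 1 (ell G) := by linarith
          have : (0 : ℝ) < (((max 1 (ell G)) : ℚ) : ℝ) := by exact_mod_cast this
          positivity
        rw [Real.log_mul (by positivity) (by positivity),
          Real.log_mul (ne_of_gt p1) (ne_of_gt p2),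
          Real.log_mul (ne_of_gt p3) (ne_of_gt p4),
          Real.log_pow, Real.log_pow, Real.log_pow, Real.log_pow, Real.log_pow]
        have hklog : Real.log (((max 1 (ell G)) : ℚ) : ℝ) = κ := by rw [hk_def]
        have hblog : Real.log ((b0 f : ℝ)) = β := by
          rw [hb_def]
        rw [hklog, hblog]
        have := mul_le_mul_of_nonneg_left hlogLF (by positivity : (0:ℝ) ≤ (e:ℝ))
        nlinarith
      -- final arithmetic
      have hgoal : ratHeight S.det
          ≤ ((f.natDegree : ℝ) + 2) * (a + κ + β + 1) * (f.natDegree : ℝ) ^ n := by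
        refine le_trans hheight (le_trans hlogQ ?_)
        have hdr2 : (2 : ℝ) ≤ (f.natDegree : ℝ) := by exact_mod_cast hd2
        have hPr1 : (1 : ℝ) ≤ (f.natDegree : ℝ) ^ n := one_le_pow₀ (by linarith)
        have hmr : (m : ℝ) ≤ (f.natDegree : ℝ) ^ n := by
          have : (m : ℝ) + 1 ≤ ((f.natDegree ^ n : ℕ) : ℝ) := by exact_mod_cast hmn
          push_cast at this
          linarith
        have her : (e : ℝ) ≤ (f.natDegree : ℝ) := by
          have : e ≤ f.natDegree := le_of_lt he
          exact_mod_cast this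
        have hNr : (N : ℝ) ≤ 2 * (f.natDegree : ℝ) ^ n := by
          have : (N : ℝ) ≤ ((2 * f.natDegree ^ n : ℕ) : ℝ) := by exact_mod_cast hNle
          push_cast at this
          linarith
        have he0 : (0 : ℝ) ≤ (e : ℝ) := by positivity
        have hN0 : (0 : ℝ) ≤ (N : ℝ) := by positivity
        have hm0 : (0 : ℝ) ≤ (m : ℝ) := by positivity
        have t1 : (e : ℝ) * ((m : ℝ) * β) ≤ (f.natDegree : ℝ) * ((f.natDegree : ℝ) ^ n * β) := by
          gcongr
        have t2 : (N : ℝ) * β ≤ 2 * (f.natDegree : ℝ) ^ n * β :=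
          mul_le_mul_of_nonneg_right hNr hb0'
        have t3 : (e : ℝ) * ((m : ℝ) * a) ≤ (f.natDegree : ℝ) * ((f.natDegree : ℝ) ^ n * a) := by
          gcongr
        have t4 : (N : ℝ) * κ ≤ 2 * (f.natDegree : ℝ) ^ n * κ :=
          mul_le_mul_of_nonneg_right hNr hk0
        nlinarith [mul_nonneg (mul_nonneg (by linarith : (0:ℝ) ≤ (f.natDegree:ℝ)) hk0) (by linarith : (0:ℝ) ≤ (f.natDegree:ℝ)^n),
          mul_nonneg (by linarith : (0:ℝ) ≤ (f.natDegree:ℝ)) (by linarith : (0:ℝ) ≤ (f.natDegree:ℝ)^n),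
          mul_nonneg ha0 (by linarith : (0:ℝ) ≤ (f.natDegree:ℝ)^n),
          mul_nonneg hb0' (by linarith : (0:ℝ) ≤ (f.natDegree:ℝ)^n),
          mul_nonneg hk0 (by linarith : (0:ℝ) ≤ (f.natDegree:ℝ)^n),
          hPr1]
      exact hgoal
  · -- degenerate case: d = 1
    have hd1 : f.natDegree = 1 := by omega
    have he0 : (derivative f).natDegree = 0 := by
      have := Polynomial.natDegree_derivative_lt (p := f) (by omega)
      omega
    have hval : ∀ n : ℕ, _root_.resultant (polyIter f n) (derivative f) = f.coeff 1 := by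
      intro n
      have hsz : (polyIter f n).natDegree + (derivative f).natDegree = 1 := by
        rw [natDegree_polyIter, he0, hd1, one_pow]
      rw [_root_.resultant, det_size_one hsz]
      simp only [sylvesterMatrix, Matrix.of_apply, he0]
      norm_num
      rw [Polynomial.coeff_derivative]
      norm_num
    refine ⟨max 1 (ratHeight (f.coeff 1)) + 1, by
      have : (1 : ℝ) ≤ max 1 (ratHeight (f.coeff 1)) := le_max_left _ _
      linarith, fun n hn => ?_⟩
    rw [hval n, hd1]
    push_cast
    rw [one_pow, mul_one]
    have := le_max_right 1 (ratHeight (f.coeff 1))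
    linarith
end

section
/- Let f(X) = f_d X^d + f_{d-1} X^{d-1} + f_0 ∈ ℚ[X] with d ≥ 2 and f_d, f_{d-1} ≠ 0, and set γ = -(d-1)f_{d-1}/(d f_d). Then for all integers m, n ≥ 1, Res(f^(m) · f^(n), f') = (-1)^{(d-1)(d^m + d^n)} · (d f_d)^{d^m + d^n} · (f^(m)(0) · f^(n)(0))^{d-2} · f^(m)(γ) · f^(n)(γ). -/
open Polynomial

private lemma finRotate_pow_apply (M k : ℕ) (hM : 0 < M) (x : Fin M) :
    ((finRotate M) ^ k) x = ⟨(((x : ℕ) + k) % M), Nat.mod_lt _ hM⟩ := by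
  obtain ⟨M', rfl⟩ : ∃ M', M = M' + 1 := ⟨M - 1, by omega⟩
  induction k with
  | zero =>
      ext
      simp [Nat.mod_eq_of_lt x.isLt]
  | succ k ih =>
      rw [pow_succ', Equiv.Perm.mul_apply, ih, finRotate_succ_apply]
      ext
      simp only [Fin.add_def, Fin.val_one']
      conv_rhs => rw [show (x : ℕ) + (k + 1) = ((x : ℕ) + k) + 1 from rfl, Nat.add_mod]

private lemma det_aux (N e : ℕ) (he : 1 ≤ e) (heN : e ≤ N) (a b c : ℚ)
    (hc : a * c + b = 0) (p : ℚ[X]) (hp : p.natDegree = N)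
    (S : Matrix (Fin (N + e)) (Fin (N + e)) ℚ)
    (Htop : ∀ i j : Fin (N + e), (i : ℕ) < e →
      S i j = if (i : ℕ) ≤ (j : ℕ) ∧ (j : ℕ) ≤ (i : ℕ) + N then
        p.coeff (N + (i : ℕ) - (j : ℕ)) else 0)
    (Hbot : ∀ i j : Fin (N + e), e ≤ (i : ℕ) →
      S i j = if (j : ℕ) = (i : ℕ) - e then a
        else if (j : ℕ) = (i : ℕ) - e + 1 then b else 0) :
    S.det = (-1) ^ (e * N) * a ^ N * (p.coeff 0) ^ (e - 1) * p.eval c := by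
  have hN : 1 ≤ N := le_trans he heN
  -- the unitriangular matrix of powers of c
  set U : Matrix (Fin (N + e)) (Fin (N + e)) ℚ := Matrix.of fun i j =>
    if (i : ℕ) ≤ (j : ℕ) ∧ (j : ℕ) ≤ N then c ^ ((j : ℕ) - (i : ℕ))
    else if i = j then 1 else 0 with hU
  have hUval : ∀ (x : ℕ) (hx : x < N + e) (j : Fin (N + e)),
      U ⟨x, hx⟩ j = if x ≤ (j : ℕ) ∧ (j : ℕ) ≤ N then c ^ ((j : ℕ) - x)
        else if x = (j : ℕ) then 1 else 0 := by
    intro x hx j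
    simp only [hU, Matrix.of_apply, Fin.ext_iff]
  have hUtri : U.BlockTriangular id := by
    intro i j hij
    have hij' : (j : ℕ) < (i : ℕ) := hij
    simp only [hU, Matrix.of_apply]
    rw [if_neg (by omega), if_neg (by intro h; rw [h] at hij'; omega)]
  have hUdet : U.det = 1 := by
    rw [Matrix.det_of_upperTriangular hUtri]
    apply Finset.prod_eq_one
    intro i _
    by_cases hi : (i : ℕ) ≤ N <;> simp [hU, hi]
  set T := S * U with hT
  have hdet : T.det = S.det := by rw [hT, Matrix.det_mul, hUdet, mul_one]
  -- bottom rows of T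
  have hTbot : ∀ i j : Fin (N + e), e ≤ (i : ℕ) →
      T i j = if (j : ℕ) = (i : ℕ) - e then a else 0 := by
    intro i j hi
    have hik : (i : ℕ) - e < N := by omega
    have hik1 : (i : ℕ) - e + 1 < N + e := by omega
    have hsum : T i j = a * U ⟨(i : ℕ) - e, by omega⟩ j + b * U ⟨(i : ℕ) - e + 1, hik1⟩ j := by
      rw [hT, Matrix.mul_apply]
      have hfun : ∀ x : Fin (N + e), S i x * U x j
          = (if x = (⟨(i : ℕ) - e, by omega⟩ : Fin (N + e)) then a * U x j else 0)
            + (if x = (⟨(i : ℕ) - e + 1, hik1⟩ : Fin (N + e)) then b * U x j else 0) := by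
        intro x
        rw [Hbot i x hi]
        simp only [Fin.ext_iff]
        split_ifs <;> first | ring1 | (exfalso; omega)
      rw [Finset.sum_congr rfl fun x _ => hfun x, Finset.sum_add_distrib,
        Finset.sum_ite_eq' Finset.univ, Finset.sum_ite_eq' Finset.univ,
        if_pos (Finset.mem_univ _), if_pos (Finset.mem_univ _)]
    rw [hsum, hUval, hUval]
    by_cases h1 : (j : ℕ) = (i : ℕ) - e
    · rw [if_pos h1, if_pos ⟨by omega, by omega⟩,
        if_neg (by omega : ¬((i : ℕ) - e + 1 ≤ (j : ℕ) ∧ (j : ℕ) ≤ N)),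
        if_neg (by omega), show (j : ℕ) - ((i : ℕ) - e) = 0 from by omega, pow_zero]
      ring
    · rw [if_neg h1]
      by_cases h2 : (i : ℕ) - e + 1 ≤ (j : ℕ) ∧ (j : ℕ) ≤ N
      · rw [if_pos h2, if_pos ⟨by omega, by omega⟩,
          show (j : ℕ) - ((i : ℕ) - e) = ((j : ℕ) - ((i : ℕ) - e + 1)) + 1 from by omega,
          pow_succ, show (j : ℕ) - ((i : ℕ) - e + 1) = (j : ℕ) - ((i : ℕ) - e) - 1 from by omega]
        linear_combination c ^ ((j : ℕ) - ((i : ℕ) - e) - 1) * hc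
      · rw [if_neg h2, if_neg (by omega : ¬((i : ℕ) - e ≤ (j : ℕ) ∧ (j : ℕ) ≤ N)),
          if_neg (by omega), if_neg (by omega)]
        ring
  -- top rows of T, right columns
  have hTtopR : ∀ i j : Fin (N + e), (i : ℕ) < e → N < (j : ℕ) →
      T i j = if (j : ℕ) - N ≤ (i : ℕ) then p.coeff ((i : ℕ) - ((j : ℕ) - N)) else 0 := by
    intro i j hi hj
    have hTS : T i j = S i j := by
      rw [hT, Matrix.mul_apply]
      have hfun : ∀ x : Fin (N + e), S i x * U x j = if x = j then S i x else 0 := by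
        intro x
        have hx : U x j = if x = j then 1 else 0 := by
          simp only [hU, Matrix.of_apply]
          rw [if_neg (by omega)]
        rw [hx]
        split_ifs <;> ring
      rw [Finset.sum_congr rfl fun x _ => hfun x, Finset.sum_ite_eq' Finset.univ,
        if_pos (Finset.mem_univ _)]
    rw [hTS, Htop i j hi]
    by_cases hij : (j : ℕ) - N ≤ (i : ℕ)
    · rw [if_pos hij, if_pos ⟨by omega, by omega⟩]
      congr 1
      omega
    · rw [if_neg hij, if_neg (by omega)]
  -- top row 0, column N
  have hTtop0 : ∀ i j : Fin (N + e), (i : ℕ) = 0 → (j : ℕ) = N → T i j = p.eval c := by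
    intro i j hi hj
    rw [hT, Matrix.mul_apply]
    have hfun : ∀ x : Fin (N + e), S i x * U x j =
        if (x : ℕ) ≤ N then p.coeff (N - (x : ℕ)) * c ^ (N - (x : ℕ)) else 0 := by
      intro x
      rw [Htop i x (by omega)]
      simp only [hU, Matrix.of_apply]
      by_cases hx : (x : ℕ) ≤ N
      · rw [if_pos ⟨by omega, by omega⟩, if_pos ⟨by omega, by omega⟩, if_pos hx]
        congr 2 <;> omega
      · rw [if_neg (by omega), zero_mul, if_neg hx]
    rw [Finset.sum_congr rfl fun x _ => hfun x]
    rw [Fin.sum_univ_eq_sum_range (fun t => if t ≤ N then p.coeff (N - t) * c ^ (N - t) else 0)]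
    rw [← Finset.sum_subset (Finset.range_subset_range.mpr (by omega : N + 1 ≤ N + e))
      (fun x hx hx' => by
        rw [if_neg (by simp only [Finset.mem_range] at hx hx'; omega)])]
    rw [Finset.sum_congr rfl (fun x hx => if_pos (by simp only [Finset.mem_range] at hx; omega))]
    rw [eval_eq_sum_range' (n := N + 1) (by omega) c]
    rw [← Finset.sum_range_reflect (fun t => p.coeff t * c ^ t) (N + 1)]
    simp only [Nat.add_sub_cancel]
  -- block decomposition
  set ρ : (Fin N ⊕ Fin e) ≃ Fin (N + e) :=
    (Equiv.sumComm (Fin N) (Fin e)).trans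
      ((finSumFinEquiv : Fin e ⊕ Fin N ≃ Fin (e + N)).trans (finCongr (Nat.add_comm e N))) with hρ
  set σ : (Fin N ⊕ Fin e) ≃ Fin (N + e) := finSumFinEquiv with hσ
  have hρl : ∀ k : Fin N, ((ρ (Sum.inl k) : Fin (N + e)) : ℕ) = e + (k : ℕ) := by
    intro k; simp [hρ]; omega
  have hρr : ∀ i : Fin e, ((ρ (Sum.inr i) : Fin (N + e)) : ℕ) = (i : ℕ) := by
    intro i; simp [hρ]
  have hσl : ∀ k : Fin N, ((σ (Sum.inl k) : Fin (N + e)) : ℕ) = (k : ℕ) := by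
    intro k; simp [hσ]
  have hσr : ∀ t : Fin e, ((σ (Sum.inr t) : Fin (N + e)) : ℕ) = N + (t : ℕ) := by
    intro t; simp [hσ]
  set Cm : Matrix (Fin e) (Fin N) ℚ :=
    Matrix.of fun i k => T (ρ (Sum.inr i)) (σ (Sum.inl k)) with hCm
  set Dm : Matrix (Fin e) (Fin e) ℚ :=
    Matrix.of fun i t => T (ρ (Sum.inr i)) (σ (Sum.inr t)) with hDm
  have hblocks : T.submatrix ρ σ
      = Matrix.fromBlocks (a • (1 : Matrix (Fin N) (Fin N) ℚ)) 0 Cm Dm := by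
    ext x y
    rcases x with k | i <;> rcases y with k' | t
    · simp only [Matrix.submatrix_apply, Matrix.fromBlocks_apply₁₁, Matrix.smul_apply,
        Matrix.one_apply]
      rw [hTbot _ _ (by rw [hρl]; omega), hρl, hσl]
      by_cases h : (k : ℕ) = (k' : ℕ)
      · rw [if_pos (by omega), if_pos (Fin.ext h)]
        simp
      · rw [if_neg (by omega), if_neg (fun hh => h (congrArg Fin.val hh))]
        simp
    · simp only [Matrix.submatrix_apply, Matrix.fromBlocks_apply₁₂, Matrix.zero_apply]
      rw [hTbot _ _ (by rw [hρl]; omega), hρl, hσr]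
      rw [if_neg (by omega)]
    · simp only [Matrix.submatrix_apply, Matrix.fromBlocks_apply₂₁, hCm, Matrix.of_apply]
    · simp only [Matrix.submatrix_apply, Matrix.fromBlocks_apply₂₂, hDm, Matrix.of_apply]
  -- determinant of the block matrix
  have hDtri : Dm.BlockTriangular OrderDual.toDual := by
    intro i t hit
    have hit' : (i : ℕ) < (t : ℕ) := hit
    simp only [hDm, Matrix.of_apply]
    rw [hTtopR _ _ (by rw [hρr]; exact i.isLt) (by rw [hσr]; omega), hρr, hσr]
    rw [if_neg (by omega)]
  have hDdet : Dm.det = p.eval c * (p.coeff 0) ^ (e - 1) := by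
    rw [Matrix.det_of_lowerTriangular _ hDtri]
    have hz : (⟨0, by omega⟩ : Fin e) ∈ Finset.univ := Finset.mem_univ _
    rw [← Finset.mul_prod_erase Finset.univ _ hz]
    have h0 : Dm ⟨0, by omega⟩ ⟨0, by omega⟩ = p.eval c := by
      simp only [hDm, Matrix.of_apply]
      exact hTtop0 _ _ (by rw [hρr]) (by rw [hσr]; simp)
    have hrest : ∀ x ∈ Finset.univ.erase (⟨0, by omega⟩ : Fin e),
        Dm x x = p.coeff 0 := by
      intro x hx
      have hx0 : 0 < (x : ℕ) := by
        rcases Finset.mem_erase.mp hx with ⟨hne, -⟩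
        rcases Nat.eq_zero_or_pos (x : ℕ) with h | h
        · exact absurd (Fin.ext h) hne
        · exact h
      simp only [hDm, Matrix.of_apply]
      rw [hTtopR _ _ (by rw [hρr]; exact x.isLt) (by rw [hσr]; omega), hρr, hσr]
      rw [if_pos (by omega)]
      congr 1
      omega
    rw [h0, Finset.prod_congr rfl hrest, Finset.prod_const,
      Finset.card_erase_of_mem hz, Finset.card_univ, Fintype.card_fin]
  -- the permutation and its sign
  set q : Equiv.Perm (Fin N ⊕ Fin e) := ρ.trans σ.symm with hq
  have hWperm : T.submatrix ρ σ = (T.submatrix σ σ).submatrix q id := by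
    ext x y
    simp [hq, Matrix.submatrix_apply]
  have hWdet : (T.submatrix ρ σ).det = ((Equiv.Perm.sign q : ℤ) : ℚ) * T.det := by
    rw [hWperm, Matrix.det_permute, Matrix.det_submatrix_equiv_self]
  have hsq : ((Equiv.Perm.sign q : ℤ) : ℚ) = (-1 : ℚ) ^ (e * N) := by
    have h2 : σ.permCongr q = (finRotate (N + e)) ^ e := by
      apply Equiv.ext
      intro x
      obtain ⟨y, rfl⟩ := σ.surjective x
      rw [finRotate_pow_apply _ _ (by omega)]
      have hL : (σ.permCongr q) (σ y) = ρ y := by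
        simp [hq, Equiv.permCongr_apply]
      rw [hL]
      rcases y with k | i
      · apply Fin.ext
        rw [hρl]
        show e + (k : ℕ) = ((↑(σ (Sum.inl k)) : ℕ) + e) % (N + e)
        rw [hσl, Nat.mod_eq_of_lt (by omega)]
        omega
      · apply Fin.ext
        rw [hρr]
        show (i : ℕ) = ((↑(σ (Sum.inr i)) : ℕ) + e) % (N + e)
        rw [hσr, show (N + (i : ℕ)) + e = (N + e) + (i : ℕ) from by omega,
          Nat.add_mod_left, Nat.mod_eq_of_lt (by omega)]
    have h3 : Equiv.Perm.sign (finRotate (N + e)) = (-1 : ℤˣ) ^ (N + e - 1) := by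
      rw [show N + e = (N + e - 1) + 1 from by omega, sign_finRotate]
    have h4 : Equiv.Perm.sign q = (-1 : ℤˣ) ^ ((N + e - 1) * e) := by
      rw [← Equiv.Perm.sign_permCongr σ q, h2, map_pow, h3, ← pow_mul]
    rw [h4]
    push_cast
    obtain ⟨e1, rfl⟩ : ∃ e1, e = e1 + 1 := ⟨e - 1, by omega⟩
    have harith : (N + (e1 + 1) - 1) * (e1 + 1) = (e1 + 1) * N + e1 * (e1 + 1) := by
      rw [show N + (e1 + 1) - 1 = N + e1 from by omega]
      ring
    rw [harith, pow_add, Even.neg_one_pow (Nat.even_mul_succ_self e1), mul_one]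
  -- assembly
  have hkey : ((-1 : ℚ)) ^ (e * N) * T.det = a ^ N * Dm.det := by
    rw [← hsq, ← hWdet, hblocks, Matrix.det_fromBlocks_zero₁₂, Matrix.det_smul,
      Matrix.det_one, mul_one, Fintype.card_fin]
  have hsign2 : ((-1 : ℚ)) ^ (e * N) * ((-1 : ℚ)) ^ (e * N) = 1 := by
    rw [← pow_add]
    exact Even.neg_one_pow ⟨e * N, rfl⟩
  have hTval : T.det = (-1 : ℚ) ^ (e * N) * (a ^ N * Dm.det) := by
    calc T.det = ((-1 : ℚ) ^ (e * N) * (-1 : ℚ) ^ (e * N)) * T.det := by rw [hsign2, one_mul]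
    _ = (-1 : ℚ) ^ (e * N) * ((-1 : ℚ) ^ (e * N) * T.det) := by ring
    _ = (-1 : ℚ) ^ (e * N) * (a ^ N * Dm.det) := by rw [hkey]
  rw [← hdet, hTval, hDdet]
  ring

/-- Resultant identity for trinomial-type polynomials
`f = f_d X^d + f_{d-1} X^{d-1} + f_0`, with `γ = -(d-1)f_{d-1}/(d f_d)` the unique
nonzero critical point. -/
theorem resultant_product_iterates (f : ℚ[X]) (d : ℕ) (fd fd1 f0 : ℚ)
    (hd : 2 ≤ d) (hfd : fd ≠ 0) (hfd1 : fd1 ≠ 0)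
    (hf : f = C fd * X ^ d + C fd1 * X ^ (d - 1) + C f0) :
    ∀ m n : ℕ, 1 ≤ m → 1 ≤ n →
      _root_.resultant (polyIter f m * polyIter f n) (derivative f) =
        (-1 : ℚ) ^ ((d - 1) * (d ^ m + d ^ n)) * ((d : ℚ) * fd) ^ (d ^ m + d ^ n) *
          ((polyIter f m).eval 0 * (polyIter f n).eval 0) ^ (d - 2) *
          (polyIter f m).eval (-(((d : ℚ) - 1) * fd1) / ((d : ℚ) * fd)) *
          (polyIter f n).eval (-(((d : ℚ) - 1) * fd1) / ((d : ℚ) * fd)) := by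
  intro m n hm hn
  have hd1 : (1 : ℕ) ≤ d := by omega
  have hdQ : ((d : ℚ)) ≠ 0 := Nat.cast_ne_zero.mpr (by omega)
  -- the derivative
  have hf' : derivative f
      = C ((d : ℚ) * fd) * X ^ (d - 1) + C (((d : ℚ) - 1) * fd1) * X ^ (d - 2) := by
    rw [hf, derivative_add, derivative_add, derivative_C, derivative_C_mul_X_pow,
      derivative_C_mul_X_pow, add_zero, Nat.cast_sub hd1, Nat.cast_one,
      show d - 1 - 1 = d - 2 from by omega, mul_comm fd ((d : ℚ)), mul_comm fd1 ((d : ℚ) - 1)]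
  have haQ : ((d : ℚ)) * fd ≠ 0 := mul_ne_zero hdQ hfd
  have hgdeg : (derivative f).natDegree = d - 1 := by
    rw [hf']
    have h1 : (C ((d : ℚ) * fd) * X ^ (d - 1)).natDegree = d - 1 :=
      natDegree_C_mul_X_pow _ _ haQ
    rw [natDegree_add_eq_left_of_natDegree_lt, h1]
    rw [h1]
    exact lt_of_le_of_lt (natDegree_C_mul_X_pow_le _ _) (by omega)
  have hgcoeff : ∀ t, (derivative f).coeff t
      = (if t = d - 1 then (d : ℚ) * fd else 0)
        + (if t = d - 2 then ((d : ℚ) - 1) * fd1 else 0) := by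
    intro t
    rw [hf', coeff_add, coeff_C_mul, coeff_C_mul, coeff_X_pow, coeff_X_pow]
    by_cases h1 : t = d - 1 <;> by_cases h2 : t = d - 2 <;>
      simp [h1, h2, eq_comm] <;> omega
  -- degrees of iterates
  have hfdeg : f.natDegree = d := by
    have h1 : (C fd * X ^ d).natDegree = d := natDegree_C_mul_X_pow d fd hfd
    rw [hf, add_assoc, natDegree_add_eq_left_of_natDegree_lt, h1]
    rw [h1]
    refine lt_of_le_of_lt (natDegree_add_le _ _) ?_
    refine max_lt (lt_of_le_of_lt (natDegree_C_mul_X_pow_le _ _) (by omega)) ?_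
    rw [natDegree_C]; omega
  have hiter_deg : ∀ k, (polyIter f k).natDegree = d ^ k := by
    intro k
    induction k with
    | zero => simp [polyIter]
    | succ k ih =>
        show (f.comp (polyIter f k)).natDegree = d ^ (k + 1)
        rw [natDegree_comp, hfdeg, ih, pow_succ, mul_comm]
  have hiter_ne : ∀ k, polyIter f k ≠ 0 := by
    intro k h
    have h1 := hiter_deg k
    rw [h, natDegree_zero] at h1
    have : 0 < d ^ k := Nat.pow_pos (by omega)
    omega
  have hPdeg : (polyIter f m * polyIter f n).natDegree = d ^ m + d ^ n := by
    rw [natDegree_mul (hiter_ne m) (hiter_ne n), hiter_deg, hiter_deg]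
  have hdm : d ≤ d ^ m := Nat.le_self_pow (by omega) d
  have hdn : d ≤ d ^ n := Nat.le_self_pow (by omega) d
  have heN : d - 1 ≤ d ^ m + d ^ n := by omega
  -- reindexing the Sylvester matrix
  have hMcast : (polyIter f m * polyIter f n).natDegree + (derivative f).natDegree
      = (d ^ m + d ^ n) + (d - 1) := by rw [hPdeg, hgdeg]
  set Ssub : Matrix (Fin ((d ^ m + d ^ n) + (d - 1))) (Fin ((d ^ m + d ^ n) + (d - 1))) ℚ :=
    (sylvesterMatrix (polyIter f m * polyIter f n) (derivative f)).submatrix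
      (finCongr hMcast.symm) (finCongr hMcast.symm) with hSsub
  have Htop : ∀ i j : Fin ((d ^ m + d ^ n) + (d - 1)), (i : ℕ) < d - 1 →
      Ssub i j = if (i : ℕ) ≤ (j : ℕ) ∧ (j : ℕ) ≤ (i : ℕ) + (d ^ m + d ^ n) then
        (polyIter f m * polyIter f n).coeff ((d ^ m + d ^ n) + (i : ℕ) - (j : ℕ)) else 0 := by
    intro i j hi
    simp only [hSsub, Matrix.submatrix_apply, sylvesterMatrix, Matrix.of_apply,
      finCongr_apply, Fin.coe_cast]
    rw [if_pos (by rw [hgdeg]; exact hi), hPdeg]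
  have Hbot : ∀ i j : Fin ((d ^ m + d ^ n) + (d - 1)), d - 1 ≤ (i : ℕ) →
      Ssub i j = if (j : ℕ) = (i : ℕ) - (d - 1) then (d : ℚ) * fd
        else if (j : ℕ) = (i : ℕ) - (d - 1) + 1 then ((d : ℚ) - 1) * fd1 else 0 := by
    intro i j hi
    simp only [hSsub, Matrix.submatrix_apply, sylvesterMatrix, Matrix.of_apply,
      finCongr_apply, Fin.coe_cast]
    rw [if_neg (by rw [hgdeg]; omega), hgdeg]
    by_cases h1 : (j : ℕ) = (i : ℕ) - (d - 1)
    · rw [if_pos ⟨by omega, by omega⟩, if_pos h1, hgcoeff,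
        if_pos (by omega), if_neg (by omega), add_zero]
    · by_cases h2 : (j : ℕ) = (i : ℕ) - (d - 1) + 1
      · rw [if_pos ⟨by omega, by omega⟩, if_neg h1, if_pos h2, hgcoeff,
          if_neg (by omega), if_pos (by omega), zero_add]
      · rw [if_neg h1, if_neg h2]
        by_cases h3 : (i : ℕ) - (d - 1) ≤ (j : ℕ) ∧ (j : ℕ) ≤ (i : ℕ) - (d - 1) + (d - 1)
        · rw [if_pos h3, hgcoeff, if_neg (by omega), if_neg (by omega), add_zero]
        · rw [if_neg h3]
  have hc : ((d : ℚ) * fd) * (-(((d : ℚ) - 1) * fd1) / ((d : ℚ) * fd))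
      + ((d : ℚ) - 1) * fd1 = 0 := by
    field_simp
    ring
  have key := det_aux (d ^ m + d ^ n) (d - 1) (by omega) heN ((d : ℚ) * fd)
    (((d : ℚ) - 1) * fd1) (-(((d : ℚ) - 1) * fd1) / ((d : ℚ) * fd)) hc
    (polyIter f m * polyIter f n) hPdeg Ssub Htop Hbot
  have hres : _root_.resultant (polyIter f m * polyIter f n) (derivative f) = Ssub.det := by
    rw [_root_.resultant, hSsub, Matrix.det_submatrix_equiv_self]
  rw [hres, key, coeff_zero_eq_eval_zero, eval_mul, eval_mul,
    show d - 1 - 1 = d - 2 from by omega]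
  ring
end

section
/- Let a, c be nonzero integers, d ≥ 2 an integer, and f(X) = aX^d - acX^{d-1} + c ∈ ℤ[X]. Then for every n ≥ 1: the iterate f^(n) has leading coefficient a^{(d^n - 1)/(d-1)} (in particular a power of a), every coefficient of f^(n) other than the leading one is divisible by c, and f^(n)(0) = c. In particular, 0 is pre-periodic under f. -/
open Polynomial

/-- For `f(X) = aX^d - acX^{d-1} + c`: every iterate has leading coefficient a power of
`a` (namely `a^{(d^n-1)/(d-1)}`), all other coefficients are multiples of `c`, and
`f^(n)(0) = c`; in particular `0` is pre-periodic under `f`. -/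
theorem iterates_of_eisenstein_family (a c : ℤ) (ha : a ≠ 0) (hc : c ≠ 0)
    (d : ℕ) (hd : 2 ≤ d)
    (f : ℤ[X]) (hf : f = C a * X ^ d - C (a * c) * X ^ (d - 1) + C c) :
    (∀ n : ℕ, 1 ≤ n →
      (polyIter f n).leadingCoeff = a ^ ((d ^ n - 1) / (d - 1)) ∧
      (∀ i : ℕ, i < (polyIter f n).natDegree → c ∣ (polyIter f n).coeff i) ∧
      (polyIter f n).eval 0 = c) ∧
    {x : ℤ | ∃ n : ℕ, 1 ≤ n ∧ x = (polyIter f n).eval 0}.Finite := by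
  have hd1 : d - 1 < d := by omega
  have hd0 : d ≠ 0 := by omega
  -- degree and leading coefficient of f
  have hdeg : f.natDegree = d := by
    rw [hf]; compute_degree!; omega
  have hcoeffd : f.coeff d = a := by
    rw [hf, coeff_add, coeff_sub, coeff_C_mul, coeff_C_mul, coeff_X_pow, coeff_X_pow,
      coeff_C, if_neg hd1.ne', if_neg hd0]
    simp
  have hlc : f.leadingCoeff = a := by rw [leadingCoeff, hdeg, hcoeffd]
  have hf0 : f ≠ 0 := fun h => ha (by rw [← hcoeffd, h, coeff_zero])
  -- degree of iterates
  have hdegIter : ∀ n, (polyIter f n).natDegree = d ^ n := by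
    intro n
    induction n with
    | zero => simp [polyIter]
    | succ n ih =>
      rw [polyIter, natDegree_comp, hdeg, ih, pow_succ, mul_comm]
  -- leading coefficient of iterates
  have hlcIter : ∀ n, (polyIter f n).leadingCoeff = a ^ (∑ i ∈ Finset.range n, d ^ i) := by
    intro n
    induction n with
    | zero => simp [polyIter]
    | succ n ih =>
      rw [polyIter, leadingCoeff_comp (by rw [hdegIter]; positivity), hlc, ih, hdeg,
        ← pow_mul, geom_sum_succ, pow_add, pow_one,
        mul_comm (∑ i ∈ Finset.range n, d ^ i) d]
      ring
  -- the geometric sum identity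
  have hgeo : ∀ n : ℕ, (d ^ n - 1) / (d - 1) = ∑ i ∈ Finset.range n, d ^ i := by
    intro n
    have key : (d - 1) * ∑ i ∈ Finset.range n, d ^ i = d ^ n - 1 := by
      have h1 : (1:ℕ) ≤ d ^ n := Nat.one_le_pow _ _ (by omega)
      have := geom_sum_mul (d : ℤ) n
      have hcast : ((d:ℤ) - 1) * ∑ i ∈ Finset.range n, (d:ℤ) ^ i = (d:ℤ) ^ n - 1 := by
        rw [mul_comm]; exact this
      have : ((d - 1 : ℕ) : ℤ) * ((∑ i ∈ Finset.range n, d ^ i : ℕ) : ℤ)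
          = ((d ^ n - 1 : ℕ) : ℤ) := by
        push_cast [Nat.cast_sub (by omega : 1 ≤ d), Nat.cast_sub h1]
        exact hcast
      exact_mod_cast this
    rw [← key, Nat.mul_div_cancel_left _ (by omega : 0 < d - 1)]
  -- evaluation at 0
  have heval : ∀ n, 1 ≤ n → (polyIter f n).eval 0 = c := by
    have hfc : f.eval c = c := by
      rw [hf]
      have : (c:ℤ) ^ d = c * c ^ (d - 1) := by
        rw [← pow_succ']
        congr 1
        omega
      simp [this]; ring
    intro n hn
    induction n with
    | zero => omega
    | succ n ih =>
      rcases Nat.eq_or_lt_of_le hn with h | h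
      · rw [polyIter]
        have : n = 0 := by omega
        subst this
        simp [polyIter, hf, zero_pow hd0, zero_pow (by omega : d - 1 ≠ 0)]
      · rw [polyIter, eval_comp, ih (by omega), hfc]
  -- divisibility of lower coefficients, via reduction mod c
  have hdvd : ∀ n, ∀ i, i < (polyIter f n).natDegree → c ∣ (polyIter f n).coeff i := by
    set m := c.natAbs with hm
    set φ := Int.castRingHom (ZMod m) with hφ
    have hφc : φ c = 0 := by
      simp only [hφ, Int.coe_castRingHom]
      exact (ZMod.intCast_zmod_eq_zero_iff_dvd c m).mpr (Int.natAbs_dvd.mpr dvd_rfl)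
    have hmapf : f.map φ = C (φ a) * X ^ d := by
      rw [hf, Polynomial.map_add, Polynomial.map_sub, Polynomial.map_mul,
        Polynomial.map_mul, Polynomial.map_pow, Polynomial.map_pow, map_X, map_C, map_C,
        map_C, map_mul, hφc, mul_zero, C_0, zero_mul, sub_zero, add_zero]
    have hmap : ∀ n, (polyIter f n).map φ
        = C ((φ a) ^ (∑ i ∈ Finset.range n, d ^ i)) * X ^ (d ^ n) := by
      intro n
      induction n with
      | zero => simp [polyIter]
      | succ n ih =>
        rw [polyIter, map_comp, hmapf, ih, geom_sum_succ, pow_succ d n]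
        simp only [mul_comp, C_comp, X_comp, pow_comp, mul_pow, ← C_pow, ← pow_mul]
        rw [← mul_assoc, ← C_mul, ← pow_succ', mul_comm (∑ i ∈ Finset.range n, d ^ i) d]
    intro n i hi
    rw [hdegIter] at hi
    have h0 : φ ((polyIter f n).coeff i) = 0 := by
      have := congrArg (fun p => Polynomial.coeff p i) (hmap n)
      simp only [coeff_map] at this
      rw [this, coeff_C_mul, coeff_X_pow, if_neg hi.ne, mul_zero]
    have : ((m : ℤ)) ∣ (polyIter f n).coeff i :=
      (ZMod.intCast_zmod_eq_zero_iff_dvd _ m).mp h0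
    exact Int.natAbs_dvd.mp this
  refine ⟨fun n hn => ⟨by rw [hlcIter, hgeo], hdvd n, heval n hn⟩, ?_⟩
  apply Set.Finite.subset (Set.finite_singleton c)
  rintro x ⟨n, hn, rfl⟩
  simp [heval n hn]
end

section
/- Let a, c be nonzero integers, d ≥ 2 an integer, and f(X) = aX^d - acX^{d-1} + c ∈ ℤ[X]. Suppose there is a prime p with p ∤ a, p | c and p² ∤ c. Then f is dynamically irreducible over ℚ, i.e. every iterate f^(n), n ≥ 1, is irreducible in ℚ[X]. -/
open Polynomial

/-- A polynomial is dynamically irreducible if all its iterates `f^(n)`, `n ≥ 1`,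
are irreducible. -/
def DynIrred {R : Type*} [CommSemiring R] (f : R[X]) : Prop :=
  ∀ n : ℕ, 1 ≤ n → Irreducible (polyIter f n)

theorem polyIter_map {R S : Type*} [CommSemiring R] [CommSemiring S] (φ : R →+* S)
    (f : R[X]) (n : ℕ) : polyIter (f.map φ) n = (polyIter f n).map φ := by
  induction n with
  | zero => simp [polyIter]
  | succ n ih => simp [polyIter, ih, Polynomial.map_comp]

/-- Eisenstein-type criterion: `f(X) = aX^d - acX^{d-1} + c` with `p ∤ a`, `p ∣ c`,
`p² ∤ c` is dynamically irreducible over `ℚ`. -/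
theorem eisenstein_family_dynIrred (a c : ℤ) (ha : a ≠ 0) (hc : c ≠ 0)
    (d : ℕ) (hd : 2 ≤ d)
    (f : ℤ[X]) (hf : f = C a * X ^ d - C (a * c) * X ^ (d - 1) + C c)
    (p : ℕ) (hp : p.Prime)
    (hpa : ¬ (p : ℤ) ∣ a) (hpc : (p : ℤ) ∣ c) (hp2c : ¬ (p : ℤ) ^ 2 ∣ c) :
    DynIrred (f.map (Int.castRingHom ℚ)) := by
  haveI : Fact p.Prime := ⟨hp⟩
  have hd0 : d ≠ 0 := by omega
  have hd1 : d - 1 ≠ 0 := by omega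
  have hd11 : d - 1 + 1 = d := by omega
  intro n hn
  rw [polyIter_map]
  set φp : ℤ →+* ZMod p := Int.castRingHom (ZMod p) with hφp
  -- f mod p
  have hcbar : ((c : ℤ) : ZMod p) = 0 := by
    rwa [ZMod.intCast_zmod_eq_zero_iff_dvd]
  have habar : ((a : ℤ) : ZMod p) ≠ 0 := by
    rw [Ne, ZMod.intCast_zmod_eq_zero_iff_dvd]; exact hpa
  have hmapf : f.map φp = C ((a : ℤ) : ZMod p) * X ^ d := by
    have h1 : φp c = 0 := hcbar
    have h2 : φp (a * c) = 0 := by rw [map_mul, h1, mul_zero]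
    have h3 : φp a = ((a : ℤ) : ZMod p) := rfl
    rw [hf, Polynomial.map_add, Polynomial.map_sub, Polynomial.map_mul, Polynomial.map_mul,
      Polynomial.map_pow, Polynomial.map_pow, map_C, map_C, map_C, map_X, h1, h2, h3]
    simp
  -- natDegree bound
  have hfle : f.natDegree ≤ d := by
    rw [hf]
    compute_degree
  have hdegle : ∀ m : ℕ, (polyIter f m).natDegree ≤ d ^ m := by
    intro m
    induction m with
    | zero => simp [polyIter]
    | succ m ih =>
      calc (polyIter f (m+1)).natDegree ≤ f.natDegree * (polyIter f m).natDegree :=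
            natDegree_comp_le
        _ ≤ d * d ^ m := Nat.mul_le_mul hfle ih
        _ = d ^ (m + 1) := by rw [pow_succ]; ring
  -- mod p shape of iterates
  have key : ∀ m : ℕ, ∃ b : ZMod p, b ≠ 0 ∧ (polyIter f m).map φp = C b * X ^ (d ^ m) := by
    intro m
    induction m with
    | zero => exact ⟨1, one_ne_zero, by simp [polyIter]⟩
    | succ m ih =>
      obtain ⟨b, hb0, hb⟩ := ih
      refine ⟨((a : ℤ) : ZMod p) * b ^ d, mul_ne_zero habar (pow_ne_zero _ hb0), ?_⟩
      show (f.comp (polyIter f m)).map φp = _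
      rw [Polynomial.map_comp, hmapf, hb]
      rw [mul_comp, C_comp, pow_comp, X_comp, mul_pow, ← C_pow, ← pow_mul]
      rw [← pow_succ, C_mul]
      ring
  obtain ⟨b, hb0, hb⟩ := key n
  set g := polyIter f n with hg
  -- coefficients of g mod p
  have hcoeff : ∀ m : ℕ, ((g.coeff m : ℤ) : ZMod p) = if m = d ^ n then b else 0 := by
    intro m
    have : (g.map φp).coeff m = ((g.coeff m : ℤ) : ZMod p) := by simp [coeff_map]
    rw [← this, hb]
    simp [coeff_C_mul, coeff_X_pow]
  -- natDegree g = d ^ n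
  have hclead : ((g.coeff (d ^ n) : ℤ) : ZMod p) = b := by rw [hcoeff]; simp
  have hleadne : g.coeff (d ^ n) ≠ 0 := by
    intro h; rw [h] at hclead; simp at hclead; exact hb0 hclead.symm
  have hdeg : g.natDegree = d ^ n :=
    le_antisymm (hdegle n) (le_natDegree_of_ne_zero hleadne)
  have hgne : g ≠ 0 := fun h => hleadne (by simp [h])
  -- middle coefficients divisible by p
  have hmid : ∀ m : ℕ, m < d ^ n → (p : ℤ) ∣ g.coeff m := by
    intro m hm
    rw [← ZMod.intCast_zmod_eq_zero_iff_dvd, hcoeff]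
    simp [Nat.ne_of_lt hm]
  -- leading coefficient not divisible by p
  have hlead : ¬ (p : ℤ) ∣ g.leadingCoeff := by
    rw [leadingCoeff, hdeg]
    intro h
    rw [← ZMod.intCast_zmod_eq_zero_iff_dvd] at h
    rw [hclead] at h
    exact hb0 h
  -- constant coefficient is c
  have hevalc : f.eval c = c := by
    rw [hf]
    have hcd : c ^ d = c ^ (d - 1) * c := by rw [← pow_succ, hd11]
    simp only [eval_add, eval_sub, eval_mul, eval_C, eval_pow, eval_X]
    rw [hcd]; ring
  have heval0 : ∀ m : ℕ, 1 ≤ m → (polyIter f m).eval 0 = c := by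
    intro m hm
    induction m with
    | zero => omega
    | succ m ih =>
      show (f.comp (polyIter f m)).eval 0 = c
      rw [eval_comp]
      rcases Nat.eq_zero_or_pos m with h0 | h1
      · subst h0
        have : (polyIter f 0).eval 0 = 0 := by simp [polyIter]
        rw [this, hf]
        simp [zero_pow hd0, zero_pow hd1]
      · rw [ih h1, hevalc]
  have hc0 : g.coeff 0 = c := by
    rw [coeff_zero_eq_eval_zero]; exact heval0 n hn
  -- content facts
  have hcont0 : g.content ≠ 0 := fun h => hgne (content_eq_zero_iff.1 h)
  have hpcont : ¬ (p : ℤ) ∣ g.content := fun h =>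
    hlead (h.trans (g.content_dvd_coeff g.natDegree))
  set h := g.primPart with hhdef
  have hgh : g = C g.content * h := g.eq_C_content_mul_primPart
  have hhcoeff : ∀ m : ℕ, g.coeff m = g.content * h.coeff m := by
    intro m
    conv_lhs => rw [hgh]
    simp [coeff_C_mul]
  have hhdeg : h.natDegree = d ^ n := by rw [hhdef, natDegree_primPart, hdeg]
  have hhne : h ≠ 0 := g.primPart_ne_zero
  have hppr : Prime (p : ℤ) := Nat.prime_iff_prime_int.1 hp
  -- Eisenstein on h over ℤ
  have hirr : Irreducible h := by
    apply irreducible_of_eisenstein_criterion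
      (P := Ideal.span {(p : ℤ)})
      ((Ideal.span_singleton_prime (by exact_mod_cast hp.ne_zero)).2 hppr)
    · rw [Ideal.mem_span_singleton]
      intro hdvd
      apply hlead
      rw [leadingCoeff, hhcoeff]
      rw [hdeg, ← hhdeg]
      exact Dvd.dvd.mul_left hdvd _
    · intro m hm
      rw [Ideal.mem_span_singleton]
      rw [degree_eq_natDegree hhne, Nat.cast_lt, hhdeg] at hm
      have := hmid m hm
      rw [hhcoeff] at this
      exact (hppr.dvd_mul.1 this).resolve_left hpcont
    · rw [degree_eq_natDegree hhne, hhdeg]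
      have : 0 < d ^ n := Nat.pow_pos (by omega)
      exact_mod_cast this
    · rw [Ideal.span_singleton_pow, Ideal.mem_span_singleton]
      intro hdvd
      apply hp2c
      rw [← hc0, hhcoeff]
      exact Dvd.dvd.mul_left hdvd _
    · exact g.isPrimitive_primPart
  -- move to ℚ
  have hirrQ : Irreducible (h.map (Int.castRingHom ℚ)) :=
    (Polynomial.IsPrimitive.Int.irreducible_iff_irreducible_map_cast g.isPrimitive_primPart).1 hirr
  have hcQ : ((g.content : ℤ) : ℚ) ≠ 0 := by exact_mod_cast hcont0
  have hunit : IsUnit (C ((g.content : ℤ) : ℚ)) :=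
    Polynomial.isUnit_C.2 (isUnit_iff_ne_zero.2 hcQ)
  have hassoc : Associated (h.map (Int.castRingHom ℚ)) (g.map (Int.castRingHom ℚ)) := by
    refine ⟨hunit.unit, ?_⟩
    rw [IsUnit.unit_spec]
    conv_rhs => rw [hgh]
    rw [Polynomial.map_mul, map_C]
    simp only [eq_intCast]
    ring
  exact hassoc.irreducible hirrQ
end
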